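/- Let G = (V, E) be a directed graph on n ≥ 2 vertices with latin matrix L and latin powers L^[k]. For i ≠ j, the words of L^[n−1]_{ij} other than λ are exactly the vertex sequences of the Hamiltonian paths of G from v_i to v_j (elementary paths of length n − 1, which visit every vertex of G exactly once); in particular, G has a Hamiltonian path from v_i to v_j if and only if L^[n−1]_{ij} ≠ {λ}. -/

import Mathlib

attribute [local instance] Classical.propDecidable

/-- A simple word over an alphabet: a nonempty word with pairwise distinct letters. -/
def IsSimpleWord {α : Type*} (w : List α) : Prop := w ≠ [] ∧ w.Nodup

/-- A simple cyclic word: a word of the form `a₁…a_k a₁` with `a₁…a_k` a simple word. -/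
def IsCyclicWord {α : Type*} (w : List α) : Prop :=
  ∃ (a : α) (l : List α), (a :: l).Nodup ∧ w = (a :: l) ++ [a]

/-- `Σ_dw*`: the set of distinguished words over `α`, together with the empty word `λ = []`. -/
def DW (α : Type*) : Set (List α) :=
  {w | w = [] ∨ IsSimpleWord w ∨ IsCyclicWord w}

/-- The latin composition of (distinguished) words.  If either word is `λ` or a simple
cyclic word the result is `λ`; for simple words `x = a₁…a_k`, `y = b₁…b_r`:
`x ∘ℓ y = a₁…a_k b₂…b_r` if `a_k = b₁` and `{a₁,…,a_k} ∩ {b₂,…,b_r} = ∅`;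
`x ∘ℓ y = a₁…a_k b₂…b_{r-1} a₁` if `a_k = b₁`, `b_r = a₁` and
`{a₁,…,a_k} ∩ {b₂,…,b_{r-1}} = ∅`; and `x ∘ℓ y = λ` otherwise. -/
noncomputable def latin {α : Type*} (x y : List α) : List α :=
  if IsSimpleWord x ∧ IsSimpleWord y then
    if x.getLast? = y.head? ∧ ∀ a ∈ x, a ∉ y.tail then
      x ++ y.tail
    else if x.getLast? = y.head? ∧ y.getLast? = x.head? ∧ ∀ a ∈ x, a ∉ y.tail.dropLast then
      x ++ y.tail.dropLast ++ x.head?.toList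
    else []
  else []

/-- A distinguished language over `α`: a set of distinguished words containing `λ`. -/
def IsDLang {α : Type*} (L : Set (List α)) : Prop := L ⊆ DW α ∧ [] ∈ L

/-- The latin composition of languages: `L₁ ∘ℓ L₂ = {x ∘ℓ y : x ∈ L₁, y ∈ L₂}`. -/
def latinLang {α : Type*} (L₁ L₂ : Set (List α)) : Set (List α) :=
  {w | ∃ x ∈ L₁, ∃ y ∈ L₂, w = latin x y}

/-- The latin matrix of the directed graph `G = (Fin n, E)`: entry `(i,j)` is the
distinguished language `{λ, v_i v_j}` if `(v_i, v_j) ∈ E`, and `{λ}` otherwise. -/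
noncomputable def latinMat {n : ℕ} (E : Set (Fin n × Fin n)) :
    Fin n → Fin n → Set (List (Fin n)) :=
  fun i j => if (i, j) ∈ E then {[], [i, j]} else {[]}

/-- Matrix product over the semiring of distinguished languages:
`(M ∘ℓ N)_{ij} = ⋃_m M_{im} ∘ℓ N_{mj}`. -/
def latinMatMul {n : ℕ} (M N : Fin n → Fin n → Set (List (Fin n))) :
    Fin n → Fin n → Set (List (Fin n)) :=
  fun i j => ⋃ m : Fin n, latinLang (M i m) (N m j)

/-- Latin powers of a matrix: `L^[1] = L` and `L^[k] = L ∘ℓ L^[k-1]` for `k ≥ 2`. -/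
noncomputable def latinPow {n : ℕ} (M : Fin n → Fin n → Set (List (Fin n))) :
    ℕ → Fin n → Fin n → Set (List (Fin n))
  | 0 => fun _ _ => {[]}
  | 1 => M
  | k + 2 => latinMatMul M (latinPow M (k + 1))


section Aux

variable {α : Type*}

lemma not_simple_nil : ¬ IsSimpleWord ([] : List α) := fun h => h.1 rfl

lemma latin_not_simple_left {x : List α} (h : ¬ IsSimpleWord x) (y : List α) :
    latin x y = [] := by
  rw [latin, if_neg]; rintro ⟨h', -⟩; exact h h'

lemma latin_not_simple_right {y : List α} (h : ¬ IsSimpleWord y) (x : List α) :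
    latin x y = [] := by
  rw [latin, if_neg]; rintro ⟨-, h'⟩; exact h h'

lemma latin_nil_left (y : List α) : latin [] y = [] :=
  latin_not_simple_left not_simple_nil y

lemma cyclic_not_simple {w : List α} (h : IsCyclicWord w) : ¬ IsSimpleWord w := by
  obtain ⟨a, l, hnd, rfl⟩ := h
  rintro ⟨-, hnd2⟩
  rw [List.nodup_append] at hnd2
  exact hnd2.2.2 a List.mem_cons_self a (List.mem_singleton_self a) rfl

lemma nil_mem_latinPow {n : ℕ} (M : Fin n → Fin n → Set (List (Fin n)))
    (hM : ∀ a b, [] ∈ M a b) : ∀ (k : ℕ) (a b : Fin n), [] ∈ latinPow M k a b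
  | 0, _, _ => rfl
  | 1, a, b => hM a b
  | (k+2), a, b =>
    Set.mem_iUnion.mpr ⟨a, [], hM a a, [], nil_mem_latinPow M hM (k+1) a b,
      (latin_nil_left []).symm⟩

lemma nil_mem_latinMat {n : ℕ} (E : Set (Fin n × Fin n)) (a b : Fin n) :
    [] ∈ latinMat E a b := by
  unfold latinMat; split <;> simp

lemma latinPow_char {n : ℕ} (E : Set (Fin n × Fin n)) :
    ∀ k, 1 ≤ k → ∀ (m j : Fin n) (w : List (Fin n)),
      w ∈ latinPow (latinMat E) k m j ↔
        (w = [] ∨ (w.length = k + 1 ∧ w.head? = some m ∧ w.getLast? = some j ∧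
          w.Chain' (fun a b => (a, b) ∈ E) ∧ (IsSimpleWord w ∨ IsCyclicWord w))) := by
  intro k hk
  induction k, hk using Nat.le_induction with
  | base =>
    intro m j w
    show w ∈ latinMat E m j ↔ _
    unfold latinMat
    by_cases he : (m, j) ∈ E
    · rw [if_pos he]
      constructor
      · intro hw
        rcases hw with rfl | hw
        · exact Or.inl rfl
        · rw [Set.mem_singleton_iff] at hw
          subst hw
          refine Or.inr ⟨rfl, rfl, rfl, List.isChain_pair.mpr he, ?_⟩
          by_cases hmj : m = j
          · subst hmj; exact Or.inr ⟨m, [], List.nodup_singleton m, rfl⟩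
          · exact Or.inl ⟨by simp, by simp [hmj]⟩
      · rintro (rfl | ⟨hl, hh, hlast, hch, -⟩)
        · exact Or.inl rfl
        · obtain ⟨a, b, rfl⟩ := List.length_eq_two.mp hl
          obtain rfl : a = m := by simpa using hh
          obtain rfl : b = j := by simpa using hlast
          exact Or.inr rfl
    · rw [if_neg he]
      constructor
      · rintro rfl; exact Or.inl rfl
      · rintro (rfl | ⟨hl, hh, hlast, hch, -⟩)
        · rfl
        · exfalso
          obtain ⟨a, b, rfl⟩ := List.length_eq_two.mp hl
          obtain rfl : a = m := by simpa using hh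
          obtain rfl : b = j := by simpa using hlast
          exact he (List.isChain_pair.mp hch)
  | succ K hK IH =>
    intro m j w
    obtain ⟨k, rfl⟩ : ∃ k', K = k' + 1 := ⟨K - 1, by omega⟩
    show w ∈ latinMatMul (latinMat E) (latinPow (latinMat E) (k+1)) m j ↔ _
    constructor
    · intro hw
      obtain ⟨p, hp⟩ := Set.mem_iUnion.mp hw
      obtain ⟨x, hx, y, hy, rfl⟩ := hp
      by_cases hxs : IsSimpleWord x
      swap
      · rw [latin_not_simple_left hxs]; exact Or.inl rfl
      have hx' : (m, p) ∈ E ∧ x = [m, p] := by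
        unfold latinMat at hx
        by_cases he : (m, p) ∈ E
        · rw [if_pos he] at hx
          rcases hx with rfl | hx
          · exact absurd hxs not_simple_nil
          · rw [Set.mem_singleton_iff] at hx; exact ⟨he, hx⟩
        · rw [if_neg he, Set.mem_singleton_iff] at hx
          subst hx; exact absurd hxs not_simple_nil
      obtain ⟨he, rfl⟩ := hx'
      have hmp : m ≠ p := by
        intro h; subst h; simpa using hxs.2
      by_cases hys : IsSimpleWord y
      swap
      · rw [latin_not_simple_right hys]; exact Or.inl rfl
      rcases (IH p j y).mp hy with rfl | ⟨hyl, hyh, hylast, hych, -⟩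
      · exact absurd hys not_simple_nil
      obtain ⟨p', t, hyeq⟩ := List.exists_cons_of_ne_nil hys.1
      have hpq : p = p' := by rw [hyeq] at hyh; simpa using hyh.symm
      subst hpq; subst hyeq
      have htl : t.length = k + 1 := by simpa using hyl
      have ht : t ≠ [] := by intro h; rw [h] at htl; simp at htl
      rw [latin, if_pos ⟨hxs, hys⟩]
      by_cases hA : ([m, p] : List (Fin n)).getLast? = (p :: t).head? ∧
          ∀ a ∈ ([m, p] : List (Fin n)), a ∉ (p :: t).tail
      · rw [if_pos hA]
        simp only [List.tail_cons, List.cons_append, List.nil_append]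
        refine Or.inr ⟨by simp [htl], rfl, ?_, ?_, Or.inl ⟨List.cons_ne_nil _ _, ?_⟩⟩
        · rw [List.getLast?_cons_cons]; exact hylast
        · exact List.isChain_cons_cons.mpr ⟨he, hych⟩
        · refine List.nodup_cons.mpr ⟨?_, hys.2⟩
          rw [List.mem_cons]
          rintro (rfl | hmem)
          · exact hmp rfl
          · exact hA.2 m (by simp) hmem
      · rw [if_neg hA]
        by_cases hB : ([m, p] : List (Fin n)).getLast? = (p :: t).head? ∧
            (p :: t).getLast? = ([m, p] : List (Fin n)).head? ∧
            ∀ a ∈ ([m, p] : List (Fin n)), a ∉ (p :: t).tail.dropLast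
        · rw [if_pos hB]
          obtain ⟨-, hBlast, hBnotin⟩ := hB
          have hjm : j = m := by rw [hylast] at hBlast; simpa using hBlast
          have hmj : m = j := hjm.symm
          subst hmj
          rcases List.eq_nil_or_concat t with rfl | ⟨t', b, rfl⟩
          · exact absurd rfl ht
          rw [List.concat_eq_append] at *
          obtain rfl : m = b := by
            have hgl : (p :: (t' ++ [b])).getLast? = some b := by
              rw [show p :: (t' ++ [b]) = (p :: t') ++ [b] by simp,
                List.getLast?_concat]
            rw [hgl] at hylast
            have hbj : b = m := by simpa using hylast
            exact hbj.symm
          have hres : ([m, p] : List (Fin n)) ++ (p :: (t' ++ [m])).tail.dropLast ++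
              (([m, p] : List (Fin n)).head?.toList) = (m :: p :: t') ++ [m] := by
            simp [List.dropLast_concat]
          rw [hres]
          have htl' : t'.length = k := by simpa using htl
          have hmt' : m ∉ t' := by
            have := hBnotin m (by simp)
            simpa [List.dropLast_concat] using this
          have hpt' : p ∉ t' := by
            have := hBnotin p (by simp)
            simpa [List.dropLast_concat] using this
          refine Or.inr ⟨by simp [htl'], rfl, List.getLast?_concat, ?_, Or.inr ?_⟩
          · have : (m :: p :: t') ++ [m] = m :: (p :: (t' ++ [m])) := by simp
            rw [this]
            exact List.isChain_cons_cons.mpr ⟨he, hych⟩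
          · refine ⟨m, p :: t', ?_, by simp⟩
            refine List.nodup_cons.mpr ⟨?_, ?_⟩
            · rw [List.mem_cons]
              rintro (rfl | hmem)
              · exact hmp rfl
              · exact hmt' hmem
            · have hsub : List.Sublist (p :: t') (p :: (t' ++ [m])) :=
                List.cons_sublist_cons.mpr (List.sublist_append_left t' [m])
              exact hys.2.sublist hsub
        · rw [if_neg hB]; exact Or.inl rfl
    · rintro (rfl | ⟨hl, hh, hlast, hch, hdw⟩)
      · exact Set.mem_iUnion.mpr ⟨m, [], nil_mem_latinMat E m m, [],
          nil_mem_latinPow _ (nil_mem_latinMat E) _ m j, (latin_nil_left []).symm⟩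
      · have hwne : w ≠ [] := by intro h; rw [h] at hh; simp at hh
        obtain ⟨m', y, hweq⟩ := List.exists_cons_of_ne_nil hwne
        obtain rfl : m = m' := by rw [hweq] at hh; simpa using hh.symm
        subst hweq
        have hyl : y.length = k + 2 := by simpa using hl
        have hyne : y ≠ [] := by intro h; rw [h] at hyl; simp at hyl
        obtain ⟨p, t, hyeq⟩ := List.exists_cons_of_ne_nil hyne
        subst hyeq
        have htl : t.length = k + 1 := by simpa using hyl
        have ht : t ≠ [] := by intro h; rw [h] at htl; simp at htl
        have hE : (m, p) ∈ E := (List.isChain_cons_cons.mp hch).1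
        have hych : (p :: t).Chain' (fun a b => (a, b) ∈ E) := (List.isChain_cons_cons.mp hch).2
        have hlast' : (p :: t).getLast? = some j := by
          rw [← hlast, List.getLast?_cons_cons]
        have hxmem : ([m, p] : List (Fin n)) ∈ latinMat E m p := by
          unfold latinMat; rw [if_pos hE]; exact Or.inr rfl
        rcases hdw with hw | hw
        · -- simple word case
          have hnd := hw.2
          have hmp : m ≠ p := by
            intro h; subst h; simp at hnd
          have hmpt : m ∉ p :: t := (List.nodup_cons.mp hnd).1
          have hndpt : (p :: t).Nodup := (List.nodup_cons.mp hnd).2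
          have hymem : (p :: t) ∈ latinPow (latinMat E) (k+1) p j :=
            (IH p j _).mpr (Or.inr ⟨by simpa using hyl, rfl, hlast', hych,
              Or.inl ⟨List.cons_ne_nil _ _, hndpt⟩⟩)
          refine Set.mem_iUnion.mpr ⟨p, [m, p], hxmem, p :: t, hymem, ?_⟩
          have hxs : IsSimpleWord ([m, p] : List (Fin n)) := ⟨by simp, by simp [hmp]⟩
          have hys : IsSimpleWord (p :: t) := ⟨List.cons_ne_nil _ _, hndpt⟩
          rw [latin, if_pos ⟨hxs, hys⟩, if_pos]
          · simp
          · refine ⟨by simp, ?_⟩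
            intro a ha
            simp only [List.mem_cons, List.mem_singleton, List.not_mem_nil, or_false] at ha
            rcases ha with rfl | rfl
            · intro hmem
              exact hmpt (List.mem_cons_of_mem p hmem)
            · exact (List.nodup_cons.mp hndpt).1
        · -- cyclic word case
          obtain ⟨a, l, hnd, heq⟩ := hw
          rw [List.cons_append] at heq
          obtain ⟨rfl, heq2⟩ : m = a ∧ p :: t = l ++ [a] := by
            rw [List.cons.injEq] at heq; exact ⟨heq.1, heq.2⟩
          rcases l with _ | ⟨p', l'⟩
          · exfalso
            simp only [List.nil_append] at heq2
            rw [List.cons.injEq] at heq2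
            exact ht heq2.2
          rw [List.cons_append, List.cons.injEq] at heq2
          obtain ⟨rfl, rfl⟩ := heq2
          -- now t = l' ++ [m], hnd : (m :: p :: l').Nodup
          have hmp : m ≠ p := by
            intro h; subst h; simp at hnd
          have hml' : m ∉ l' := by
            intro h; exact (List.nodup_cons.mp hnd).1 (List.mem_cons_of_mem p h)
          have hpl' : p ∉ l' := by
            intro h; exact (List.nodup_cons.mp (List.nodup_cons.mp hnd).2).1 h
          have hl'nd : l'.Nodup := (List.nodup_cons.mp (List.nodup_cons.mp hnd).2).2
          have hndy : (p :: (l' ++ [m])).Nodup := by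
            refine List.nodup_cons.mpr ⟨?_, ?_⟩
            · rw [List.mem_append, List.mem_singleton]
              rintro (h | rfl)
              · exact hpl' h
              · exact hmp rfl
            · rw [List.nodup_append]
              exact ⟨hl'nd, List.nodup_singleton m,
                fun x hx y hy hxy => hml' (by rw [List.mem_singleton] at hy; rw [← hy, ← hxy]; exact hx)⟩
          have hymem : (p :: (l' ++ [m])) ∈ latinPow (latinMat E) (k+1) p j :=
            (IH p j _).mpr (Or.inr ⟨by simpa using hyl, rfl, hlast', hych,
              Or.inl ⟨List.cons_ne_nil _ _, hndy⟩⟩)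
          refine Set.mem_iUnion.mpr ⟨p, [m, p], hxmem, p :: (l' ++ [m]), hymem, ?_⟩
          have hxs : IsSimpleWord ([m, p] : List (Fin n)) := ⟨by simp, by simp [hmp]⟩
          have hys : IsSimpleWord (p :: (l' ++ [m])) := ⟨List.cons_ne_nil _ _, hndy⟩
          rw [latin, if_pos ⟨hxs, hys⟩, if_neg, if_pos]
          · simp [List.dropLast_concat]
          · refine ⟨by simp, ?_, ?_⟩
            · rw [show p :: (l' ++ [m]) = (p :: l') ++ [m] by simp, List.getLast?_concat]
              simp
            · intro x hx
              simp only [List.mem_cons, List.mem_singleton, List.not_mem_nil, or_false] at hx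
              simp only [List.tail_cons, List.dropLast_concat]
              rcases hx with rfl | rfl
              · exact hml'
              · exact hpl'
          · rintro ⟨-, hcon⟩
            exact hcon m (by simp) (by simp)

end Aux

/-- for `n ≥ 2` and `i ≠ j`, the words of `L^[n-1]_{ij}` other than `λ`
are exactly the vertex sequences of the Hamiltonian paths of `G` from `v_i` to `v_j`
(sequences listing each vertex exactly once, starting at `v_i`, ending at `v_j`, and
following arcs of `G`); in particular `G` has a Hamiltonian path from `v_i` to `v_j`
iff `L^[n-1]_{ij} ≠ {λ}`. -/
theorem latinPow_hamiltonian_paths (n : ℕ) (hn : 2 ≤ n) (E : Set (Fin n × Fin n))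
    (i j : Fin n) (hij : i ≠ j) :
    (∀ w : List (Fin n),
      (w ∈ latinPow (latinMat E) (n - 1) i j ∧ w ≠ []) ↔
        ((∀ v : Fin n, w.count v = 1) ∧ w.head? = some i ∧ w.getLast? = some j ∧
          w.Chain' (fun a b => (a, b) ∈ E))) ∧
    ((∃ w : List (Fin n),
        (∀ v : Fin n, w.count v = 1) ∧ w.head? = some i ∧ w.getLast? = some j ∧
          w.Chain' (fun a b => (a, b) ∈ E)) ↔
      latinPow (latinMat E) (n - 1) i j ≠ {([] : List (Fin n))}) := by
  have h1 : 1 ≤ n - 1 := by omega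
  have hchar := latinPow_char E (n - 1) h1 i j
  have H : ∀ w : List (Fin n),
      (w ∈ latinPow (latinMat E) (n - 1) i j ∧ w ≠ []) ↔
        ((∀ v : Fin n, w.count v = 1) ∧ w.head? = some i ∧ w.getLast? = some j ∧
          w.Chain' (fun a b => (a, b) ∈ E)) := by
    intro w
    constructor
    · rintro ⟨hw, hne⟩
      rcases (hchar w).mp hw with rfl | ⟨hl, hh, hlast, hch, hdw⟩
      · exact absurd rfl hne
      · refine ⟨?_, hh, hlast, hch⟩
        have hnd : w.Nodup := by
          rcases hdw with hs | hc
          · exact hs.2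
          · exfalso
            obtain ⟨a, l, -, rfl⟩ := hc
            apply hij
            have e1 : a = i := by
              rw [List.cons_append] at hh; simpa using hh
            have e2 : a = j := by
              rw [← Option.some_inj, ← hlast, List.getLast?_concat]
            rw [← e1, e2]
        have hlen : w.length = n := by omega
        intro v
        have hmem : v ∈ w := by
          have hcard : w.toFinset = Finset.univ := Finset.eq_univ_of_card _
            (by rw [List.toFinset_card_of_nodup hnd, hlen, Fintype.card_fin])
          rw [← List.mem_toFinset, hcard]; exact Finset.mem_univ v
        exact List.count_eq_one_of_mem hnd hmem
    · rintro ⟨hcount, hh, hlast, hch⟩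
      have hne : w ≠ [] := by intro h; rw [h] at hh; simp at hh
      have hnd : w.Nodup := List.nodup_iff_count_le_one.mpr (fun a => (hcount a).le)
      have hsub : w.toFinset = Finset.univ := Finset.eq_univ_iff_forall.mpr
        (fun v => List.mem_toFinset.mpr (List.count_pos_iff.mp (by rw [hcount v]; norm_num)))
      have hlen : w.length = n := by
        rw [← List.toFinset_card_of_nodup hnd, hsub, Finset.card_univ, Fintype.card_fin]
      exact ⟨(hchar w).mpr (Or.inr ⟨by omega, hh, hlast, hch, Or.inl ⟨hne, hnd⟩⟩), hne⟩
  refine ⟨H, ?_⟩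
  have hnilS : [] ∈ latinPow (latinMat E) (n - 1) i j :=
    nil_mem_latinPow _ (nil_mem_latinMat E) _ i j
  constructor
  · rintro ⟨w, hw⟩ hS
    have h2 := (H w).mpr hw
    rw [hS] at h2
    exact h2.2 h2.1
  · intro hS
    have hex : ∃ w ∈ latinPow (latinMat E) (n - 1) i j, w ≠ [] := by
      by_contra hcon
      push_neg at hcon
      apply hS
      ext w
      rw [Set.mem_singleton_iff]
      constructor
      · intro hw; exact hcon w hw
      · rintro rfl; exact hnilS
    obtain ⟨w, hw, hne⟩ := hex
    exact ⟨w, (H w).mp ⟨hw, hne⟩⟩
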